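/- If the heat semiflow on ℝ/qℤ starts at u with Fourier coefficients u_k, and k₀ = min{k : u_k ≠ 0}, then u(t,·)/‖u(t,·)‖ converges as t → ∞ (in W^{2,2}) to the normalized k₀-th mode: lim_{t→∞} u(t,·)/‖u(t,·)‖_{W^{2,2}} = Re(u_{k₀} e^{2πik₀x/q}) / ‖Re(u_{k₀} e^{2πik₀x/q})‖_{W^{2,2}}. -/

import Mathlib

open scoped Real
open Filter

/-- Exponential dominance of the lowest nonzero Fourier mode under the heat flow:
the normalized solution converges in the weighted `W^{2,2}` norm
`‖v‖² = Σ_k (1+k⁴)|v_k|²` to the normalized `k₀`-th mode, where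
`k₀ = min {k : u_k ≠ 0}`. -/
theorem stmt_11 (q : ℕ) (hq : 0 < q) (N k₀ : ℕ) (hk₀N : k₀ ≤ N) (c : ℕ → ℂ)
    (hk₀ : c k₀ ≠ 0) (hmin : ∀ k < k₀, c k = 0)
    (n : ℝ → ℝ)
    (hn : ∀ t, n t = Real.sqrt (∑ k ∈ Finset.range (N + 1),
        (1 + (k : ℝ) ^ 4) * (Real.exp (-(4 * π ^ 2 * k ^ 2 / q ^ 2) * t) * ‖c k‖) ^ 2)) :
    Filter.Tendsto
      (fun t : ℝ => ∑ k ∈ Finset.range (N + 1), (1 + (k : ℝ) ^ 4) *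
        ‖(Real.exp (-(4 * π ^ 2 * k ^ 2 / q ^ 2) * t) * c k) / (n t : ℂ) -
          (if k = k₀ then c k₀ / ((Real.sqrt (1 + (k₀ : ℝ) ^ 4) * ‖c k₀‖ : ℝ) : ℂ)
            else 0)‖ ^ 2)
      Filter.atTop (nhds 0) := by
  have hq' : (0:ℝ) < (q:ℝ) := by exact_mod_cast hq
  set lam : ℕ → ℝ := fun k => 4 * π ^ 2 * (k:ℝ) ^ 2 / (q:ℝ) ^ 2 with hlam
  have habs0 : 0 < ‖c k₀‖ := norm_pos_iff.mpr hk₀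
  set L : ℝ := Real.sqrt (1 + (k₀:ℝ)^4) * ‖c k₀‖ with hLdef
  have hL0 : 0 < L := by
    apply mul_pos _ habs0
    apply Real.sqrt_pos.2; positivity
  set m : ℝ → ℝ := fun t => Real.exp (lam k₀ * t) * n t with hmdef
  have hn0 : ∀ t, 0 ≤ n t := fun t => by rw [hn t]; exact Real.sqrt_nonneg _
  have hm0 : ∀ t, 0 ≤ m t := fun t => mul_nonneg (Real.exp_pos _).le (hn0 t)
  -- m squared as a sum
  have hmsq : ∀ t, m t ^ 2 = ∑ k ∈ Finset.range (N+1),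
      (1 + (k:ℝ)^4) * (Real.exp ((lam k₀ - lam k) * t) * ‖c k‖) ^ 2 := by
    intro t
    have hS : 0 ≤ ∑ k ∈ Finset.range (N + 1),
        (1 + (k : ℝ) ^ 4) * (Real.exp (-(4 * π ^ 2 * k ^ 2 / q ^ 2) * t) * ‖c k‖) ^ 2 := by
      positivity
    simp only [hmdef]
    rw [mul_pow, hn t, Real.sq_sqrt hS, Finset.mul_sum]
    refine Finset.sum_congr rfl fun k _ => ?_
    have he : Real.exp ((lam k₀ - lam k) * t)
        = Real.exp (lam k₀ * t) * Real.exp (-(4 * π ^ 2 * (k:ℝ) ^ 2 / (q:ℝ) ^ 2) * t) := by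
      rw [← Real.exp_add]; congr 1; simp only [hlam]; ring
    rw [he]; ring
  -- limit of each term of m²
  have hterm : ∀ k ∈ Finset.range (N+1), Tendsto
      (fun t => (1 + (k:ℝ)^4) * (Real.exp ((lam k₀ - lam k) * t) * ‖c k‖) ^ 2)
      atTop (nhds (if k = k₀ then (1 + (k₀:ℝ)^4) * ‖c k₀‖ ^ 2 else 0)) := by
    intro k _
    rcases lt_trichotomy k k₀ with h | h | h
    · simpa [hmin k h, h.ne] using (tendsto_const_nhds : Tendsto (fun _ : ℝ => (0:ℝ)) atTop _)
    · subst h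
      simp only [if_pos rfl]
      have heq : ∀ t : ℝ, (1 + (k:ℝ)^4) * (Real.exp ((lam k - lam k) * t) * ‖c k‖) ^ 2
          = (1 + (k:ℝ)^4) * ‖c k‖ ^ 2 := by intro t; simp
      exact Tendsto.congr (fun t => (heq t).symm) tendsto_const_nhds
    · have hneg : lam k₀ - lam k < 0 := by
        have hkk : (k₀:ℝ)^2 < (k:ℝ)^2 := by
          have h1 : (k₀:ℝ) < (k:ℝ) := by exact_mod_cast h
          have h2 : (0:ℝ) ≤ (k₀:ℝ) := Nat.cast_nonneg _
          nlinarith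
        have hπ : 0 < π := Real.pi_pos
        simp only [hlam, sub_neg]
        gcongr
      have hexp : Tendsto (fun t => Real.exp ((lam k₀ - lam k) * t)) atTop (nhds 0) := by
        apply Real.tendsto_exp_atBot.comp
        exact Tendsto.const_mul_atTop_of_neg hneg tendsto_id
      rw [if_neg h.ne']
      have := ((hexp.mul (tendsto_const_nhds (x := ‖c k‖))).pow 2).const_mul
        (1 + (k:ℝ)^4)
      simpa using this
  -- m → L
  have hm2 : Tendsto (fun t => m t ^ 2) atTop (nhds (L ^ 2)) := by
    have hsum := tendsto_finset_sum (Finset.range (N+1)) hterm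
    have hLsq : (∑ k ∈ Finset.range (N+1),
        (if k = k₀ then (1 + (k₀:ℝ)^4) * ‖c k₀‖ ^ 2 else 0)) = L ^ 2 := by
      rw [Finset.sum_ite_eq' (Finset.range (N+1)) k₀
        (fun _ => (1 + (k₀:ℝ)^4) * ‖c k₀‖ ^ 2)]
      have hmem : k₀ ∈ Finset.range (N+1) := Finset.mem_range.2 (Nat.lt_succ_of_le hk₀N)
      rw [if_pos hmem, hLdef, mul_pow, Real.sq_sqrt (by positivity)]
    rw [← hLsq]
    exact hsum.congr fun t => (hmsq t).symm
  have hmlim : Tendsto m atTop (nhds L) := by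
    have h1 := (Real.continuous_sqrt.tendsto (L^2)).comp hm2
    rw [Real.sqrt_sq hL0.le] at h1
    exact h1.congr fun t => by simp [Function.comp, Real.sqrt_sq (hm0 t)]
  have hLne : ((L:ℝ):ℂ) ≠ 0 := Complex.ofReal_ne_zero.2 hL0.ne'
  have hmC : Tendsto (fun t => ((m t : ℝ) : ℂ)) atTop (nhds ((L:ℝ):ℂ)) :=
    (Complex.continuous_ofReal.tendsto L).comp hmlim
  -- per-mode limit of the normalized coefficient
  have hdiv : ∀ k : ℕ, Tendsto
      (fun t => ((Real.exp (-(4 * π ^ 2 * (k:ℝ) ^ 2 / (q:ℝ) ^ 2) * t) : ℝ) * c k) / ((n t : ℝ) : ℂ))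
      atTop (nhds (if k = k₀ then c k₀ / ((L:ℝ):ℂ) else 0)) := by
    intro k
    have heq : ∀ t : ℝ,
        ((Real.exp (-(4 * π ^ 2 * (k:ℝ) ^ 2 / (q:ℝ) ^ 2) * t) : ℝ) * c k : ℂ) / ((n t : ℝ):ℂ)
        = ((Real.exp ((lam k₀ - lam k) * t) : ℝ):ℂ) * c k / ((m t : ℝ):ℂ) := by
      intro t
      have hE : ((Real.exp (lam k₀ * t) : ℝ) : ℂ) ≠ 0 :=
        Complex.ofReal_ne_zero.2 (Real.exp_pos _).ne'
      have he : Real.exp ((lam k₀ - lam k) * t)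
          = Real.exp (lam k₀ * t) * Real.exp (-(4 * π ^ 2 * (k:ℝ) ^ 2 / (q:ℝ) ^ 2) * t) := by
        rw [← Real.exp_add]; congr 1; simp only [hlam]; ring
      simp only [hmdef]
      rw [he, Complex.ofReal_mul, Complex.ofReal_mul (Real.exp (lam k₀ * t)) (n t),
        mul_assoc ((Real.exp (lam k₀ * t) : ℝ) : ℂ), mul_div_mul_left _ _ hE]
    have hnum : Tendsto (fun t => ((Real.exp ((lam k₀ - lam k)*t) : ℝ):ℂ) * c k) atTop
        (nhds (if k = k₀ then c k₀ else 0)) := by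
      rcases lt_trichotomy k k₀ with h | h | h
      · simpa [hmin k h, h.ne] using
          (tendsto_const_nhds : Tendsto (fun _ : ℝ => (0:ℂ)) atTop _)
      · subst h
        simp only [if_pos rfl, sub_self, zero_mul, Real.exp_zero, Complex.ofReal_one, one_mul]
        exact tendsto_const_nhds
      · have hneg : lam k₀ - lam k < 0 := by
          have hkk : (k₀:ℝ)^2 < (k:ℝ)^2 := by
            have h1 : (k₀:ℝ) < (k:ℝ) := by exact_mod_cast h
            have h2 : (0:ℝ) ≤ (k₀:ℝ) := Nat.cast_nonneg _
            nlinarith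
          have hπ : 0 < π := Real.pi_pos
          simp only [hlam, sub_neg]
          gcongr
        have hexp : Tendsto (fun t => Real.exp ((lam k₀ - lam k) * t)) atTop (nhds 0) := by
          apply Real.tendsto_exp_atBot.comp
          exact Tendsto.const_mul_atTop_of_neg hneg tendsto_id
        have hexpC := (Complex.continuous_ofReal.tendsto 0).comp hexp
        simp only [Function.comp, Complex.ofReal_zero] at hexpC
        rw [if_neg h.ne']
        have h0 := hexpC.mul (tendsto_const_nhds (x := c k))
        rw [zero_mul] at h0
        exact h0
    have hfin := hnum.div hmC hLne
    have hlim : (if k = k₀ then c k₀ else 0) / ((L:ℝ):ℂ)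
        = (if k = k₀ then c k₀ / ((L:ℝ):ℂ) else 0) := by
      split <;> simp
    rw [hlim] at hfin
    exact hfin.congr fun t => (heq t).symm
  -- each summand tends to 0
  have hkey : ∀ k ∈ Finset.range (N+1), Tendsto
      (fun t : ℝ => (1 + (k : ℝ) ^ 4) *
        ‖(Real.exp (-(4 * π ^ 2 * k ^ 2 / q ^ 2) * t) * c k) / (n t : ℂ) -
          (if k = k₀ then c k₀ / ((L:ℝ) : ℂ) else 0)‖ ^ 2)
      atTop (nhds 0) := by
    intro k _
    have hsub := (hdiv k).sub (tendsto_const_nhds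
      (x := if k = k₀ then c k₀ / ((L:ℝ):ℂ) else 0))
    rw [sub_self] at hsub
    have habs := (continuous_norm.tendsto 0).comp hsub
    simp only [Function.comp_def] at habs
    rw [norm_zero] at habs
    have := (habs.pow 2).const_mul (1 + (k:ℝ)^4)
    simpa using this
  have hfinal := tendsto_finset_sum (Finset.range (N+1)) hkey
  simpa using hfinal
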